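/- Let B be a Δ-regular N×N boolean matrix with 1 ≤ Δ ≤ N/2, let S = 2B − J be its signed version, and let λ > 0 be such that ‖Bx‖ ≤ λ‖x‖ for every x ∈ ℝ^N whose coordinates sum to zero. Then the matrix M = (N/Δ)·B − J satisfies M_{i,j}·S_{i,j} ≥ 1 for all i,j, and ‖M‖ ≤ N·λ/Δ. -/

import Mathlib

/-- The Euclidean (ℓ²) norm of a vector in `ℝ^N`. -/
noncomputable def euclNorm {N : ℕ} (x : Fin N → ℝ) : ℝ :=
  Real.sqrt (∑ i, x i ^ 2)

/-- The spectral norm (ℓ² → ℓ² operator norm) of a real `N × N` matrix: the least nonnegative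
`t` with `‖Mx‖ ≤ t‖x‖` for all `x`. -/
noncomputable def specNorm {N : ℕ} (M : Matrix (Fin N) (Fin N) ℝ) : ℝ :=
  sInf {t : ℝ | 0 ≤ t ∧ ∀ x : Fin N → ℝ, euclNorm (M.mulVec x) ≤ t * euclNorm x}

lemma euclNorm_smul {N : ℕ} (a : ℝ) (v : Fin N → ℝ) :
    euclNorm (a • v) = |a| * euclNorm v := by
  unfold euclNorm
  rw [← Real.sqrt_sq_eq_abs, ← Real.sqrt_mul (sq_nonneg a)]
  congr 1
  rw [Finset.mul_sum]
  apply Finset.sum_congr rfl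
  intro i _
  simp [mul_pow]

/-- let `B` be a `Δ`-regular `N × N` boolean matrix with `1 ≤ Δ ≤ N/2`, let
`S = 2B - J` be its signed version, and let `λ > 0` bound `‖Bx‖ ≤ λ‖x‖` for all `x` with
coordinates summing to zero. Then `M = (N/Δ)·B - J` satisfies `M i j * S i j ≥ 1` for all
`i, j`, and `‖M‖ ≤ N·λ/Δ`. -/
theorem star_norm_bound_of_spectral_gap
    (N Δ : ℕ) (hΔ : 1 ≤ Δ) (hΔN : 2 * Δ ≤ N)
    (B : Matrix (Fin N) (Fin N) ℝ)
    (hbool : ∀ i j, B i j = 0 ∨ B i j = 1)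
    (hrow : ∀ i, ∑ j, B i j = (Δ : ℝ)) (hcol : ∀ j, ∑ i, B i j = (Δ : ℝ))
    (lam : ℝ) (hlam : 0 < lam)
    (hgap : ∀ x : Fin N → ℝ, ∑ i, x i = 0 → euclNorm (B.mulVec x) ≤ lam * euclNorm x)
    (S M : Matrix (Fin N) (Fin N) ℝ)
    (hSdef : S = (2 : ℝ) • B - Matrix.of fun _ _ => 1)
    (hMdef : M = ((N : ℝ) / (Δ : ℝ)) • B - Matrix.of fun _ _ => 1) :
    (∀ i j, 1 ≤ M i j * S i j) ∧ specNorm M ≤ (N : ℝ) * lam / (Δ : ℝ) := by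
  have hΔpos : (0 : ℝ) < (Δ : ℝ) := by exact_mod_cast hΔ
  have hNpos : (0 : ℝ) < (N : ℝ) := by
    have : 0 < N := by omega
    exact_mod_cast this
  have h2 : (2 : ℝ) ≤ (N : ℝ) / (Δ : ℝ) := by
    rw [le_div_iff₀ hΔpos]
    have : (2 * Δ : ℝ) ≤ (N : ℝ) := by exact_mod_cast hΔN
    linarith
  constructor
  · intro i j
    rcases hbool i j with h | h <;>
      simp [hMdef, hSdef, h] <;> nlinarith
  · apply csInf_le ⟨0, fun t ht => ht.1⟩
    refine ⟨by positivity, fun x => ?_⟩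
    set c : ℝ := (∑ i, x i) / N with hc
    set x₀ : Fin N → ℝ := fun i => x i - c with hx₀
    have hxc : ∑ i, x i = (N : ℝ) * c := by
      rw [hc]; field_simp [hNpos.ne']
    have hsum : ∑ i, x₀ i = 0 := by
      simp only [hx₀, Finset.sum_sub_distrib, Finset.sum_const, Finset.card_univ,
        Fintype.card_fin, nsmul_eq_mul]
      rw [hxc]; ring
    have hMx : M.mulVec x = ((N : ℝ) / (Δ : ℝ)) • B.mulVec x₀ := by
      funext i
      simp only [hMdef, Matrix.mulVec, dotProduct, Matrix.sub_apply,
        Matrix.smul_apply, Matrix.of_apply, Pi.smul_apply, smul_eq_mul, sub_mul, one_mul,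
        Finset.sum_sub_distrib, hx₀, mul_sub]
      rw [← Finset.sum_mul, hrow, hxc, Finset.mul_sum]
      have : ∑ j, (N : ℝ) / (Δ : ℝ) * (B i j * x j) = ∑ j, (N : ℝ) / (Δ : ℝ) * B i j * x j := by
        apply Finset.sum_congr rfl; intro j _; ring
      rw [this]
      field_simp
    have hle : euclNorm x₀ ≤ euclNorm x := by
      apply Real.sqrt_le_sqrt
      have hkey : ∑ i, x₀ i ^ 2 = ∑ i, x i ^ 2 - (2 * c * (∑ i, x i) - (N : ℝ) * c ^ 2) := by
        have : ∀ i ∈ Finset.univ, x₀ i ^ 2 = x i ^ 2 - (2 * c * x i - c ^ 2) := by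
          intro i _; simp only [hx₀]; ring
        rw [Finset.sum_congr rfl this, Finset.sum_sub_distrib, Finset.sum_sub_distrib,
          ← Finset.mul_sum, Finset.sum_const, Finset.card_univ, Fintype.card_fin,
          nsmul_eq_mul]
      rw [hkey, hxc]
      nlinarith [sq_nonneg c, hNpos]
    have hnn : (0 : ℝ) ≤ (N : ℝ) / (Δ : ℝ) := by positivity
    calc euclNorm (M.mulVec x) = ((N : ℝ) / (Δ : ℝ)) * euclNorm (B.mulVec x₀) := by
          rw [hMx, euclNorm_smul, abs_of_nonneg hnn]
      _ ≤ ((N : ℝ) / (Δ : ℝ)) * (lam * euclNorm x₀) :=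
          mul_le_mul_of_nonneg_left (hgap x₀ hsum) hnn
      _ ≤ ((N : ℝ) / (Δ : ℝ)) * (lam * euclNorm x) :=
          mul_le_mul_of_nonneg_left (mul_le_mul_of_nonneg_left hle hlam.le) hnn
      _ = (N : ℝ) * lam / (Δ : ℝ) * euclNorm x := by ring
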